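/- Let X_1, …, X_n be a Markov chain with finite state spaces S_1, …, S_n, initial distribution π on S_1 and transition matrices P_1, …, P_{n−1}, in the sense that the law of (X_1,…,X_n) on S_1×⋯×S_n assigns to (s_1,…,s_n) the probability π(s_1)·∏_{i=1}^{n−1}(P_i)_{s_i,s_{i+1}}. Then for all 1 ≤ j and k ≥ 1 with j + k ≤ n, φ(σ(X_i, i ≤ j), σ(X_i, i ≥ j+k)) ≤ τ(P_j·P_{j+1}·⋯·P_{j+k−1}). -/

import Mathlib

open MeasureTheory
open scoped BigOperators Classical
open scoped ENNReal

/-- A stochastic matrix: nonnegative entries, each row sums to 1. -/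
def IsStochastic {T S : Type} [Fintype S] (P : T → S → ℝ) : Prop :=
  (∀ t s, 0 ≤ P t s) ∧ ∀ t, ∑ s : S, P t s = 1

/-- The contraction (Dobrushin) coefficient of a matrix:
`τ(P) = (1/2)·max_{t₁,t₂} Σ_s |P t₁ s − P t₂ s|`. -/
noncomputable def contractionCoeff {T S : Type} [Fintype T] [Fintype S]
    (P : T → S → ℝ) : ℝ :=
  (1 / 2) * ⨆ t₁ : T, ⨆ t₂ : T, ∑ s : S, |P t₁ s - P t₂ s|

/-- `matProd P j k` is the product `P_j · P_{j+1} · ⋯ · P_{j+k−1}` of `k` consecutive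
transition matrices (the identity matrix if `k = 0`). -/
noncomputable def matProd {S : ℕ → Type} [∀ i, Fintype (S i)]
    (P : (i : ℕ) → S i → S (i + 1) → ℝ) (j : ℕ) : (k : ℕ) → S j → S (j + k) → ℝ
  | 0 => fun t s => if t = s then 1 else 0
  | k + 1 => fun t u => ∑ s : S (j + k), matProd P j k t s * P (j + k) s u

section Aux
variable {S : ℕ → Type} [∀ i, Fintype (S i)] [∀ i, Nonempty (S i)]
set_option linter.unusedSectionVars false

lemma matProd_nonneg (P : (i : ℕ) → S i → S (i + 1) → ℝ) (hP : ∀ i, IsStochastic (P i))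
    (j : ℕ) : ∀ (k : ℕ) (t : S j) (u : S (j + k)), 0 ≤ matProd P j k t u := by
  intro k
  induction k with
  | zero => intro t u; simp only [matProd]; split <;> norm_num
  | succ k ih =>
    intro t u
    simp only [matProd]
    exact Finset.sum_nonneg fun s _ => mul_nonneg (ih t s) ((hP (j + k)).1 s u)

lemma matProd_rowsum (P : (i : ℕ) → S i → S (i + 1) → ℝ) (hP : ∀ i, IsStochastic (P i))
    (j : ℕ) : ∀ (k : ℕ) (t : S j), ∑ u : S (j + k), matProd P j k t u = 1 := by
  intro k
  induction k with
  | zero => intro t; simp [matProd]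
  | succ k ih =>
    intro t
    simp only [matProd]
    rw [Finset.sum_comm]
    have : ∀ s : S (j + k), ∑ u : S (j + k + 1), matProd P j k t s * P (j + k) s u
        = matProd P j k t s := by
      intro s
      rw [← Finset.mul_sum, (hP (j + k)).2 s, mul_one]
    calc ∑ y : S (j + k), ∑ x : S (j + (k + 1)), matProd P j k t y * P (j + k) y x
        = ∑ y : S (j + k), matProd P j k t y := Finset.sum_congr rfl fun s _ => this s
      _ = 1 := ih t

noncomputable def dfl : ∀ i : ℕ, S i := fun i => Classical.arbitrary (S i)

noncomputable def PF (I : Finset ℕ) : Finset (∀ i : ℕ, S i) :=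
  (I.pi fun _ => Finset.univ).image (fun f i => if h : i ∈ I then f i h else dfl i)

lemma mem_PF {I : Finset ℕ} {σ : ∀ i : ℕ, S i} :
    σ ∈ (PF I : Finset (∀ i : ℕ, S i)) ↔ ∀ i ∉ I, σ i = dfl i := by
  constructor
  · rintro h i hi
    simp only [PF, Finset.mem_image] at h
    obtain ⟨f, _, rfl⟩ := h
    simp [hi]
  · intro h
    simp only [PF, Finset.mem_image]
    refine ⟨fun i _ => σ i, by simp, ?_⟩
    funext i
    by_cases hi : i ∈ I
    · simp [hi]
    · simp [hi, h i hi]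

/-- combine two trajectories along an index set -/
noncomputable def glue (I : Finset ℕ) (σ1 σ2 : ∀ i : ℕ, S i) : ∀ i : ℕ, S i :=
  fun i => if i ∈ I then σ1 i else σ2 i

lemma sum_PF_union {I J : Finset ℕ} (hIJ : Disjoint I J) (F : (∀ i : ℕ, S i) → ℝ) :
    ∑ σ ∈ (PF (I ∪ J) : Finset (∀ i : ℕ, S i)), F σ
      = ∑ σ1 ∈ (PF I : Finset (∀ i : ℕ, S i)), ∑ σ2 ∈ (PF J : Finset (∀ i : ℕ, S i)),
          F (glue I σ1 σ2) := by
  rw [← Finset.sum_product']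
  apply Finset.sum_nbij' (fun σ => (glue I σ dfl, glue J σ dfl))
    (fun p => glue I p.1 p.2)
  · intro σ hσ
    rw [mem_PF] at hσ
    simp only [Finset.mem_product, mem_PF]
    constructor
    · intro i hi; simp [glue, hi]
    · intro i hi; simp [glue, hi]
  · intro p hp
    simp only [Finset.mem_product, mem_PF] at hp
    rw [mem_PF]
    intro i hi
    simp only [Finset.mem_union, not_or] at hi
    simp [glue, hi.1, hp.2 i hi.2]
  · intro σ hσ
    rw [mem_PF] at hσ
    funext i
    by_cases hi : i ∈ I
    · simp [glue, hi]
    · by_cases hj : i ∈ J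
      · simp [glue, hi, hj]
      · have : i ∉ I ∪ J := by simp [hi, hj]
        simp [glue, hi, hj, hσ i this]
  · intro p hp
    simp only [Finset.mem_product, mem_PF] at hp
    have h1 : glue I (glue I p.1 p.2) dfl = p.1 := by
      funext i
      by_cases hi : i ∈ I
      · simp [glue, hi]
      · simp [glue, hi, hp.1 i hi]
    have h2 : glue J (glue I p.1 p.2) dfl = p.2 := by
      funext i
      by_cases hj : i ∈ J
      · have hi : i ∉ I := fun h => (Finset.disjoint_left.mp hIJ h) hj
        simp [glue, hi, hj]
      · simp [glue, hj, hp.2 i hj]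
    simp [h1, h2]
  · intro σ hσ
    rw [mem_PF] at hσ
    congr 1
    funext i
    by_cases hi : i ∈ I
    · simp [glue, hi]
    · by_cases hj : i ∈ J
      · simp [glue, hi, hj]
      · have : i ∉ I ∪ J := by simp [hi, hj]
        simp [glue, hi, hj, hσ i this]

lemma sum_PF_singleton (c : ℕ) (F : (∀ i : ℕ, S i) → ℝ) :
    ∑ σ ∈ (PF {c} : Finset (∀ i : ℕ, S i)), F σ
      = ∑ s : S c, F (Function.update dfl c s) := by
  apply Finset.sum_nbij' (fun σ => σ c) (fun s => Function.update dfl c s)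
  · intro σ _; exact Finset.mem_univ _
  · intro s _
    rw [mem_PF]
    intro i hi
    simp only [Finset.mem_singleton] at hi
    simp [Function.update_of_ne hi]
  · intro σ hσ
    rw [mem_PF] at hσ
    funext i
    by_cases hi : i = c
    · subst hi; simp
    · have : i ∉ ({c} : Finset ℕ) := by simpa using hi
      simp [Function.update_of_ne hi, hσ i this]
  · intro s _; simp
  · intro σ hσ
    rw [mem_PF] at hσ
    congr 1
    funext i
    by_cases hi : i = c
    · subst hi; simp
    · have : i ∉ ({c} : Finset ℕ) := by simpa using hi
      simp [Function.update_of_ne hi, hσ i this]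

variable (P : (i : ℕ) → S i → S (i + 1) → ℝ)

/-- weight of a path segment from `a` of length `m`, anchored to start at `t` -/
noncomputable def wseg (a m : ℕ) (t : S a) (σ : ∀ i : ℕ, S i) : ℝ :=
  ∏ i ∈ Finset.Ico a (a + m), P i (Function.update σ a t i) (Function.update σ a t (i + 1))

lemma PF_empty : (PF ∅ : Finset (∀ i : ℕ, S i)) = {dfl} := by
  ext σ
  simp only [mem_PF, Finset.mem_singleton]
  constructor
  · intro h; funext i; exact h i (by simp)
  · rintro rfl i _; rfl

lemma seg_sum (hP : ∀ i, IsStochastic (P i)) (a : ℕ) : ∀ (m : ℕ) (t : S a)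
    (v : S (a + m) → ℝ),
    ∑ σ ∈ (PF (Finset.Ioc a (a + m)) : Finset (∀ i : ℕ, S i)),
        wseg P a m t σ * v (Function.update σ a t (a + m))
      = ∑ u : S (a + m), matProd P a m t u * v u := by
  intro m
  induction m with
  | zero =>
    intro t v
    show ∑ σ ∈ (PF (Finset.Ioc a a) : Finset (∀ i : ℕ, S i)),
        wseg P a 0 t σ * v (Function.update σ a t a) = ∑ u : S (a+0), matProd P a 0 t u * v u
    rw [Finset.Ioc_self, PF_empty, Finset.sum_singleton]
    simp only [wseg, Nat.add_zero, Finset.Ico_self, Finset.prod_empty, one_mul,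
      Function.update_self, matProd]
    have : ∀ u : S a, (if t = u then (1:ℝ) else 0) * v u = if t = u then v u else 0 := by
      intro u; split <;> simp
    rw [Finset.sum_congr rfl fun u _ => this u, Finset.sum_ite_eq]
    simp
  | succ m ih =>
    intro t v
    have hsplit : Finset.Ioc a (a + (m+1)) = Finset.Ioc a (a + m) ∪ Finset.Ioc (a + m) (a + m + 1) := by
      ext x; simp only [Finset.mem_Ioc, Finset.mem_union]; omega
    have hdisj : Disjoint (Finset.Ioc a (a + m)) (Finset.Ioc (a + m) (a + m + 1)) := by
      rw [Finset.disjoint_left]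
      intro x hx hx2
      simp only [Finset.mem_Ioc] at hx hx2
      omega
    have hsing : Finset.Ioc (a + m) (a + m + 1) = {a + m + 1} := by
      ext x; simp only [Finset.mem_Ioc, Finset.mem_singleton]; omega
    rw [hsplit, sum_PF_union hdisj]
    have hinner : ∀ σ2 ∈ (PF (Finset.Ioc a (a + m)) : Finset (∀ i : ℕ, S i)),
        ∑ σ3 ∈ (PF (Finset.Ioc (a + m) (a + m + 1)) : Finset (∀ i : ℕ, S i)),
          wseg P a (m+1) t (glue (Finset.Ioc a (a + m)) σ2 σ3) *
            v (Function.update (glue (Finset.Ioc a (a + m)) σ2 σ3) a t (a + (m+1)))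
        = wseg P a m t σ2 *
            ∑ s : S (a + m + 1), P (a + m) (Function.update σ2 a t (a + m)) s * v s := by
      intro σ2 hσ2
      rw [hsing, sum_PF_singleton, Finset.mul_sum]
      apply Finset.sum_congr rfl
      intro s _
      set σ3 := Function.update (dfl : ∀ i : ℕ, S i) (a + m + 1) s with hσ3
      set gl := glue (Finset.Ioc a (a + m)) σ2 σ3 with hgl
      have hglup : ∀ i, a ≤ i → i ≤ a + m →
          Function.update gl a t i = Function.update σ2 a t i := by
        intro i h1 h2
        by_cases hia : i = a
        · subst hia; simp
        · have hmem : i ∈ Finset.Ioc a (a + m) := by simp [Finset.mem_Ioc]; omega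
          rw [Function.update_of_ne hia, Function.update_of_ne hia, hgl]
          simp [glue, hmem]
      have hgltop : Function.update gl a t (a + m + 1) = s := by
        have hne : a + m + 1 ≠ a := by omega
        have hmem : a + m + 1 ∉ Finset.Ioc a (a + m) := by simp
        rw [Function.update_of_ne hne, hgl]
        simp [glue, hmem, hσ3]
      have hw : wseg P a (m+1) t gl
          = wseg P a m t σ2 * P (a + m) (Function.update σ2 a t (a + m)) s := by
        unfold wseg
        rw [show a + (m+1) = (a + m) + 1 from rfl, Finset.prod_Ico_succ_top (by omega)]
        congr 1
        · apply Finset.prod_congr rfl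
          intro i hi
          simp only [Finset.mem_Ico] at hi
          rw [hglup i (by omega) (by omega), hglup (i+1) (by omega) (by omega)]
        · rw [hglup (a + m) (by omega) (by omega), hgltop]
      have hgltop' : Function.update gl a t (a + (m+1)) = s := hgltop
      rw [hw, hgltop']
      ring
    rw [Finset.sum_congr rfl hinner]
    rw [ih t (fun u => ∑ s : S (a + m + 1), P (a + m) u s * v s)]
    show ∑ u : S (a + m), matProd P a m t u * ∑ s : S (a+m+1), P (a + m) u s * v s
      = ∑ s : S (a + (m+1)), matProd P a (m+1) t s * v s
    simp only [matProd, Finset.sum_mul, Finset.mul_sum]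
    rw [Finset.sum_comm]
    apply Finset.sum_congr rfl
    intro s _
    apply Finset.sum_congr rfl
    intro u _
    ring

lemma full_decomp (hP : ∀ i, IsStochastic (P i)) (j k m3 : ℕ) (hj : 1 ≤ j) (hk : 1 ≤ k)
    (α β : (∀ i : ℕ, S i) → ℝ)
    (hα : ∀ σ σ' : ∀ i : ℕ, S i, (∀ i ∈ Finset.Icc (j+k) (j+k+m3), σ i = σ' i) → α σ = α σ')
    (hβ : ∀ σ σ' : ∀ i : ℕ, S i, (∀ i ∈ Finset.Icc 1 j, σ i = σ' i) → β σ = β σ')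
    (π : S 1 → ℝ) :
    ∑ σ ∈ (PF (Finset.Icc 1 (j+k+m3)) : Finset (∀ i : ℕ, S i)),
        α σ * β σ * (π (σ 1) * ∏ i ∈ Finset.Ico 1 (j+k+m3), P i (σ i) (σ (i+1)))
    = ∑ σ1 ∈ (PF (Finset.Icc 1 j) : Finset (∀ i : ℕ, S i)),
        β σ1 * (π (σ1 1) * ∏ i ∈ Finset.Ico 1 j, P i (σ1 i) (σ1 (i+1))) *
        ∑ u : S (j+k), matProd P j k (σ1 j) u *
          ∑ σ3 ∈ (PF (Finset.Ioc (j+k) (j+k+m3)) : Finset (∀ i : ℕ, S i)),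
            wseg P (j+k) m3 u σ3 * α (Function.update σ3 (j+k) u) := by
  classical
  set I1 := Finset.Icc 1 j with hI1
  set I2 := Finset.Ioc j (j+k) with hI2
  set I3 := Finset.Ioc (j+k) (j+k+m3) with hI3
  set Hfun : S (j+k) → ℝ := fun u =>
    ∑ σ3 ∈ (PF I3 : Finset (∀ i : ℕ, S i)),
      wseg P (j+k) m3 u σ3 * α (Function.update σ3 (j+k) u) with hHfun
  have hI : Finset.Icc 1 (j+k+m3) = I1 ∪ (I2 ∪ I3) := by
    ext x
    simp only [hI1, hI2, hI3, Finset.mem_Icc, Finset.mem_union, Finset.mem_Ioc]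
    omega
  have hd1 : Disjoint I1 (I2 ∪ I3) := by
    rw [Finset.disjoint_left]
    intro x hx hx2
    simp only [hI1, Finset.mem_Icc] at hx
    simp only [hI2, hI3, Finset.mem_union, Finset.mem_Ioc] at hx2
    omega
  have hd23 : Disjoint I2 I3 := by
    rw [Finset.disjoint_left]
    intro x hx hx2
    simp only [hI2, Finset.mem_Ioc] at hx
    simp only [hI3, Finset.mem_Ioc] at hx2
    omega
  rw [hI, sum_PF_union hd1]
  apply Finset.sum_congr rfl
  intro σ1 hσ1
  rw [sum_PF_union hd23]
  have hmain : ∀ σ2 ∈ (PF I2 : Finset (∀ i : ℕ, S i)), ∀ σ3 ∈ (PF I3 : Finset (∀ i : ℕ, S i)),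
      (fun σ => α σ * β σ * (π (σ 1) * ∏ i ∈ Finset.Ico 1 (j+k+m3), P i (σ i) (σ (i+1))))
        (glue I1 σ1 (glue I2 σ2 σ3))
      = β σ1 * (π (σ1 1) * ∏ i ∈ Finset.Ico 1 j, P i (σ1 i) (σ1 (i+1))) *
        (wseg P j k (σ1 j) σ2 *
          (wseg P (j+k) m3 (σ2 (j+k)) σ3 *
            α (Function.update σ3 (j+k) (σ2 (j+k))))) := by
    intro σ2 hσ2 σ3 hσ3
    set gl := glue I1 σ1 (glue I2 σ2 σ3) with hgl
    have e1 : ∀ i, 1 ≤ i → i ≤ j → gl i = σ1 i := by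
      intro i h1 h2
      have : i ∈ I1 := by simp [hI1, Finset.mem_Icc]; omega
      simp [hgl, glue, this]
    have e2 : ∀ i, j < i → i ≤ j + k → gl i = σ2 i := by
      intro i h1 h2
      have m1 : i ∉ I1 := by simp [hI1, Finset.mem_Icc]; omega
      have m2 : i ∈ I2 := by simp [hI2, Finset.mem_Ioc]; omega
      simp [hgl, glue, m1, m2]
    have e3 : ∀ i, j + k < i → gl i = σ3 i := by
      intro i h1
      have m1 : i ∉ I1 := by simp [hI1, Finset.mem_Icc]; omega
      have m2 : i ∉ I2 := by simp [hI2, Finset.mem_Ioc]; omega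
      simp [hgl, glue, m1, m2]
    have hbeta : β gl = β σ1 := by
      apply hβ
      intro i hi
      simp only [hI1, Finset.mem_Icc] at hi
      exact e1 i hi.1 hi.2
    have halpha : α gl = α (Function.update σ3 (j+k) (σ2 (j+k))) := by
      apply hα
      intro i hi
      simp only [Finset.mem_Icc] at hi
      rcases eq_or_lt_of_le hi.1 with heq | hlt
      · subst heq
        rw [Function.update_self]
        exact e2 _ (by omega) (by omega)
      · rw [Function.update_of_ne (by omega)]
        exact e3 i hlt
    have hpi : π (gl 1) = π (σ1 1) := by rw [e1 1 le_rfl hj]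
    have hsplit : ∏ i ∈ Finset.Ico 1 (j+k+m3), P i (gl i) (gl (i+1))
        = (∏ i ∈ Finset.Ico 1 j, P i (σ1 i) (σ1 (i+1))) *
          (∏ i ∈ Finset.Ico j (j+k), P i (Function.update σ2 j (σ1 j) i)
            (Function.update σ2 j (σ1 j) (i+1))) *
          (∏ i ∈ Finset.Ico (j+k) (j+k+m3), P i (Function.update σ3 (j+k) (σ2 (j+k)) i)
            (Function.update σ3 (j+k) (σ2 (j+k)) (i+1))) := by
      rw [← Finset.prod_Ico_consecutive (fun i => P i (gl i) (gl (i+1)))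
        (show 1 ≤ j+k by omega) (show j+k ≤ j+k+m3 by omega)]
      rw [← Finset.prod_Ico_consecutive (fun i => P i (gl i) (gl (i+1)))
        (show 1 ≤ j by omega) (show j ≤ j+k by omega)]
      congr 1
      congr 1
      · apply Finset.prod_congr rfl
        intro i hi
        simp only [Finset.mem_Ico] at hi
        rw [e1 i hi.1 (by omega), e1 (i+1) (by omega) (by omega)]
      · apply Finset.prod_congr rfl
        intro i hi
        simp only [Finset.mem_Ico] at hi
        have harg2 : gl (i+1) = Function.update σ2 j (σ1 j) (i+1) := by
          rw [Function.update_of_ne (by omega), e2 (i+1) (by omega) (by omega)]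
        rcases eq_or_lt_of_le hi.1 with heq | hlt
        · subst heq
          rw [Function.update_self, e1 j hj le_rfl, harg2]
        · rw [Function.update_of_ne (by omega), e2 i hlt (by omega), harg2]
      · apply Finset.prod_congr rfl
        intro i hi
        simp only [Finset.mem_Ico] at hi
        have harg2 : gl (i+1) = Function.update σ3 (j+k) (σ2 (j+k)) (i+1) := by
          rw [Function.update_of_ne (by omega), e3 (i+1) (by omega)]
        rcases eq_or_lt_of_le hi.1 with heq | hlt
        · subst heq
          rw [Function.update_self, e2 (j+k) (by omega) (by omega), harg2]
        · rw [Function.update_of_ne (by omega), e3 i hlt, harg2]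
    show α gl * β gl * (π (gl 1) * ∏ i ∈ Finset.Ico 1 (j+k+m3), P i (gl i) (gl (i+1))) = _
    rw [hbeta, halpha, hpi, hsplit]
    unfold wseg
    ring
  calc ∑ σ2 ∈ (PF I2 : Finset (∀ i : ℕ, S i)), ∑ σ3 ∈ (PF I3 : Finset (∀ i : ℕ, S i)),
        (fun σ => α σ * β σ * (π (σ 1) * ∏ i ∈ Finset.Ico 1 (j+k+m3), P i (σ i) (σ (i+1))))
          (glue I1 σ1 (glue I2 σ2 σ3))
      = ∑ σ2 ∈ (PF I2 : Finset (∀ i : ℕ, S i)),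
          β σ1 * (π (σ1 1) * ∏ i ∈ Finset.Ico 1 j, P i (σ1 i) (σ1 (i+1))) *
          (wseg P j k (σ1 j) σ2 * Hfun (σ2 (j+k))) := by
        apply Finset.sum_congr rfl
        intro σ2 hσ2
        rw [Finset.sum_congr rfl (hmain σ2 hσ2), hHfun]
        simp only [← Finset.mul_sum]
    _ = β σ1 * (π (σ1 1) * ∏ i ∈ Finset.Ico 1 j, P i (σ1 i) (σ1 (i+1))) *
          ∑ u : S (j+k), matProd P j k (σ1 j) u * Hfun u := by
        rw [← Finset.mul_sum]
        congr 1
        have hupd : ∀ σ2 : ∀ i : ℕ, S i, σ2 (j+k) = Function.update σ2 j (σ1 j) (j+k) := by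
          intro σ2
          rw [Function.update_of_ne (by omega)]
        calc ∑ σ2 ∈ (PF I2 : Finset (∀ i : ℕ, S i)), wseg P j k (σ1 j) σ2 * Hfun (σ2 (j+k))
            = ∑ σ2 ∈ (PF I2 : Finset (∀ i : ℕ, S i)),
                wseg P j k (σ1 j) σ2 * Hfun (Function.update σ2 j (σ1 j) (j+k)) := by
              apply Finset.sum_congr rfl
              intro σ2 _
              rw [← hupd]
          _ = ∑ u : S (j+k), matProd P j k (σ1 j) u * Hfun u := seg_sum P hP j k (σ1 j) Hfun

lemma wseg_nonneg (hP : ∀ i, IsStochastic (P i)) (a m : ℕ) (t : S a) (σ : ∀ i : ℕ, S i) :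
    0 ≤ wseg P a m t σ :=
  Finset.prod_nonneg fun i _ => (hP i).1 _ _

lemma wseg_sum_one (hP : ∀ i, IsStochastic (P i)) (a m : ℕ) (t : S a) :
    ∑ σ ∈ (PF (Finset.Ioc a (a+m)) : Finset (∀ i : ℕ, S i)), wseg P a m t σ = 1 := by
  have h := seg_sum P hP a m t (fun _ => (1:ℝ))
  simp only [mul_one] at h
  rw [h, matProd_rowsum P hP a m t]

lemma pastW_sum (hP : ∀ i, IsStochastic (P i)) (πd : S 1 → ℝ)
    (hπ2 : ∑ s : S 1, πd s = 1) (j : ℕ) (hj : 1 ≤ j) :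
    ∑ σ ∈ (PF (Finset.Icc 1 j) : Finset (∀ i : ℕ, S i)),
      πd (σ 1) * ∏ i ∈ Finset.Ico 1 j, P i (σ i) (σ (i+1)) = 1 := by
  obtain ⟨m, rfl⟩ : ∃ m, j = 1 + m := ⟨j - 1, by omega⟩
  have hI : Finset.Icc 1 (1+m) = {1} ∪ Finset.Ioc 1 (1+m) := by
    ext x
    simp only [Finset.mem_Icc, Finset.mem_union, Finset.mem_singleton, Finset.mem_Ioc]
    omega
  have hd : Disjoint ({1} : Finset ℕ) (Finset.Ioc 1 (1+m)) := by
    rw [Finset.disjoint_left]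
    intro x hx hx2
    simp only [Finset.mem_singleton] at hx
    simp only [Finset.mem_Ioc] at hx2
    omega
  rw [hI, sum_PF_union hd]
  have hinner : ∀ σ1 ∈ (PF {1} : Finset (∀ i : ℕ, S i)),
      ∑ σ2 ∈ (PF (Finset.Ioc 1 (1+m)) : Finset (∀ i : ℕ, S i)),
        (fun σ => πd (σ 1) * ∏ i ∈ Finset.Ico 1 (1+m), P i (σ i) (σ (i+1)))
          (glue {1} σ1 σ2)
      = πd (σ1 1) := by
    intro σ1 _
    have hterm : ∀ σ2 ∈ (PF (Finset.Ioc 1 (1+m)) : Finset (∀ i : ℕ, S i)),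
        (fun σ => πd (σ 1) * ∏ i ∈ Finset.Ico 1 (1+m), P i (σ i) (σ (i+1)))
          (glue {1} σ1 σ2)
        = πd (σ1 1) * wseg P 1 m (σ1 1) σ2 := by
      intro σ2 _
      set gl := glue ({1} : Finset ℕ) σ1 σ2 with hgl
      have g1 : gl 1 = σ1 1 := by simp [hgl, glue]
      have g2 : ∀ i, 1 < i → gl i = σ2 i := by
        intro i h1
        have : i ∉ ({1} : Finset ℕ) := by simp; omega
        simp [hgl, glue, this]
      show πd (gl 1) * ∏ i ∈ Finset.Ico 1 (1+m), P i (gl i) (gl (i+1)) = _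
      rw [g1]
      congr 1
      unfold wseg
      apply Finset.prod_congr rfl
      intro i hi
      simp only [Finset.mem_Ico] at hi
      have ha2 : gl (i+1) = Function.update σ2 1 (σ1 1) (i+1) := by
        rw [Function.update_of_ne (by omega), g2 (i+1) (by omega)]
      rcases eq_or_lt_of_le hi.1 with heq | hlt
      · subst heq
        rw [Function.update_self, g1, ha2]
      · rw [Function.update_of_ne (by omega), g2 i hlt, ha2]
    rw [Finset.sum_congr rfl hterm, ← Finset.mul_sum, wseg_sum_one P hP 1 m (σ1 1), mul_one]
  rw [Finset.sum_congr rfl hinner, sum_PF_singleton 1 (fun σ => πd (σ 1))]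
  simp only [Function.update_self]
  exact hπ2

end Aux

lemma invariance {Ω : Type} {S : ℕ → Type} (X : ∀ i : ℕ, Ω → S i) (I : Set ℕ) (A : Set Ω)
    (hA : MeasurableSet[⨆ i ∈ I, MeasurableSpace.comap (X i) ⊤] A)
    {ω ω' : Ω} (h : ∀ i ∈ I, X i ω = X i ω') : ω ∈ A ↔ ω' ∈ A := by
  let m : MeasurableSpace Ω :=
    { MeasurableSet' := fun A => ∀ ω ω', (∀ i ∈ I, X i ω = X i ω') → (ω ∈ A ↔ ω' ∈ A)
      measurableSet_empty := fun ω ω' _ => Iff.rfl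
      measurableSet_compl := fun A hA ω ω' h => by
        simp only [Set.mem_compl_iff]
        exact not_congr (hA ω ω' h)
      measurableSet_iUnion := fun f hf ω ω' h => by
        simp only [Set.mem_iUnion]
        exact exists_congr fun i => hf i ω ω' h }
  have hle : (⨆ i ∈ I, MeasurableSpace.comap (X i) ⊤) ≤ m := by
    refine iSup_le fun i => iSup_le fun hi => ?_
    rintro A ⟨E, -, rfl⟩ ω ω' h
    simp only [Set.mem_preimage, h i hi]
  exact hle A hA ω ω' h

lemma measure_biUnion_atoms {Ω : Type} [MeasurableSpace Ω] (μ : Measure Ω)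
    [IsProbabilityMeasure μ]
    {ι : Type} (E F : Finset ι) (hEF : E ⊆ F) (C : ι → Set Ω)
    (hcover : (⋃ σ ∈ F, C σ) = Set.univ)
    (p : ι → ℝ) (hp : ∀ σ, μ (C σ) = ENNReal.ofReal (p σ)) (hp0 : ∀ σ, 0 ≤ p σ)
    (hsum : ∑ σ ∈ F, p σ = 1) :
    μ (⋃ σ ∈ E, C σ) = ENNReal.ofReal (∑ σ ∈ E, p σ) := by
  have hofs : ∀ G : Finset ι, ENNReal.ofReal (∑ σ ∈ G, p σ) = ∑ σ ∈ G, ENNReal.ofReal (p σ) :=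
    fun G => ENNReal.ofReal_sum_of_nonneg fun σ _ => hp0 σ
  have hupper : ∀ G : Finset ι, μ (⋃ σ ∈ G, C σ) ≤ ENNReal.ofReal (∑ σ ∈ G, p σ) := by
    intro G
    rw [hofs]
    calc μ (⋃ σ ∈ G, C σ) ≤ ∑ σ ∈ G, μ (C σ) := measure_biUnion_finset_le G C
      _ = ∑ σ ∈ G, ENNReal.ofReal (p σ) := Finset.sum_congr rfl fun σ _ => hp σ
  refine le_antisymm (hupper E) ?_
  have hcov2 : (Set.univ : Set Ω) ⊆ (⋃ σ ∈ E, C σ) ∪ (⋃ σ ∈ F \ E, C σ) := by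
    rw [← hcover]
    intro x hx
    simp only [Set.mem_iUnion, Set.mem_union] at hx ⊢
    obtain ⟨σ, hσF, hσ⟩ := hx
    by_cases hσE : σ ∈ E
    · exact Or.inl ⟨σ, hσE, hσ⟩
    · exact Or.inr ⟨σ, Finset.mem_sdiff.mpr ⟨hσF, hσE⟩, hσ⟩
  have h1 : (1 : ℝ≥0∞) ≤ μ (⋃ σ ∈ E, C σ) + ENNReal.ofReal (∑ σ ∈ F \ E, p σ) := by
    calc (1 : ℝ≥0∞) = μ Set.univ := (measure_univ).symm
      _ ≤ μ ((⋃ σ ∈ E, C σ) ∪ (⋃ σ ∈ F \ E, C σ)) := measure_mono hcov2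
      _ ≤ μ (⋃ σ ∈ E, C σ) + μ (⋃ σ ∈ F \ E, C σ) := measure_union_le _ _
      _ ≤ _ := add_le_add le_rfl (hupper _)
  have h2 : ENNReal.ofReal (∑ σ ∈ E, p σ) + ENNReal.ofReal (∑ σ ∈ F \ E, p σ) = 1 := by
    rw [← ENNReal.ofReal_add (Finset.sum_nonneg fun σ _ => hp0 σ)
      (Finset.sum_nonneg fun σ _ => hp0 σ), Finset.sum_sdiff_eq_sub hEF]
    rw [hsum]
    norm_num
  have hfin : ENNReal.ofReal (∑ σ ∈ F \ E, p σ) ≠ ⊤ := ENNReal.ofReal_ne_top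
  rw [← h2] at h1
  exact (ENNReal.add_le_add_iff_right hfin).mp h1

lemma g_diff_le {Tj Tu : Type} [Fintype Tj] [Fintype Tu] [Nonempty Tj]
    (Q : Tj → Tu → ℝ) (hQ1 : ∀ t, ∑ u : Tu, Q t u = 1)
    (h : Tu → ℝ) (hh0 : ∀ u, 0 ≤ h u) (hh1 : ∀ u, h u ≤ 1) (t₁ t₂ : Tj) :
    (∑ u : Tu, Q t₁ u * h u) - (∑ u : Tu, Q t₂ u * h u) ≤ contractionCoeff Q := by
  have step1 : (∑ u : Tu, Q t₁ u * h u) - (∑ u : Tu, Q t₂ u * h u)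
      ≤ (1/2) * ∑ u : Tu, |Q t₁ u - Q t₂ u| := by
    rw [← Finset.sum_sub_distrib]
    have hterm : ∀ u : Tu, Q t₁ u * h u - Q t₂ u * h u ≤ max (Q t₁ u - Q t₂ u) 0 := by
      intro u
      rw [← sub_mul]
      rcases le_or_gt 0 (Q t₁ u - Q t₂ u) with hpos | hneg
      · calc (Q t₁ u - Q t₂ u) * h u ≤ (Q t₁ u - Q t₂ u) * 1 :=
              mul_le_mul_of_nonneg_left (hh1 u) hpos
          _ = Q t₁ u - Q t₂ u := mul_one _
          _ ≤ max (Q t₁ u - Q t₂ u) 0 := le_max_left _ _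
      · calc (Q t₁ u - Q t₂ u) * h u ≤ 0 :=
              mul_nonpos_of_nonpos_of_nonneg hneg.le (hh0 u)
          _ ≤ max (Q t₁ u - Q t₂ u) 0 := le_max_right _ _
    calc ∑ u : Tu, (Q t₁ u * h u - Q t₂ u * h u) ≤ ∑ u : Tu, max (Q t₁ u - Q t₂ u) 0 :=
          Finset.sum_le_sum fun u _ => hterm u
      _ = ∑ u : Tu, ((Q t₁ u - Q t₂ u) + |Q t₁ u - Q t₂ u|) / 2 := by
          apply Finset.sum_congr rfl
          intro u _
          rcases le_or_gt 0 (Q t₁ u - Q t₂ u) with hpos | hneg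
          · rw [max_eq_left hpos, abs_of_nonneg hpos]; ring
          · rw [max_eq_right hneg.le, abs_of_neg hneg]; ring
      _ = (1/2) * ∑ u : Tu, |Q t₁ u - Q t₂ u| := by
          rw [← Finset.sum_div, Finset.sum_add_distrib, Finset.sum_sub_distrib,
            hQ1 t₁, hQ1 t₂]
          ring
  refine step1.trans ?_
  unfold contractionCoeff
  apply mul_le_mul_of_nonneg_left _ (by norm_num : (0:ℝ) ≤ 1/2)
  have hbdd : ∀ t : Tj, BddAbove (Set.range fun t₂ => ∑ u : Tu, |Q t u - Q t₂ u|) :=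
    fun t => Set.Finite.bddAbove (Set.finite_range _)
  calc ∑ u : Tu, |Q t₁ u - Q t₂ u| ≤ ⨆ t₂' : Tj, ∑ u : Tu, |Q t₁ u - Q t₂' u| :=
        le_ciSup (hbdd t₁) t₂
    _ ≤ ⨆ t₁' : Tj, ⨆ t₂' : Tj, ∑ u : Tu, |Q t₁' u - Q t₂' u| :=
        le_ciSup (f := fun t₁' : Tj => ⨆ t₂' : Tj, ∑ u : Tu, |Q t₁' u - Q t₂' u|)
          (Set.Finite.bddAbove (Set.finite_range _)) t₁

lemma final_ineq {Tj Tu : Type} [Fintype Tj] [Fintype Tu] [Nonempty Tj]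
    (Q : Tj → Tu → ℝ) (hQ1 : ∀ t, ∑ u : Tu, Q t u = 1)
    (h : Tu → ℝ) (hh0 : ∀ u, 0 ≤ h u) (hh1 : ∀ u, h u ≤ 1)
    {ι : Type} (W : Finset ι) (b w : ι → ℝ) (hb0 : ∀ σ ∈ W, 0 ≤ b σ)
    (hble : ∀ σ ∈ W, b σ ≤ w σ) (hw0 : ∀ σ ∈ W, 0 ≤ w σ)
    (hw1 : ∑ σ ∈ W, w σ = 1) (hbpos : 0 < ∑ σ ∈ W, b σ)
    (tof : ι → Tj) :
    |(∑ σ ∈ W, b σ * (∑ u : Tu, Q (tof σ) u * h u)) / (∑ σ ∈ W, b σ)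
      - ∑ σ ∈ W, w σ * (∑ u : Tu, Q (tof σ) u * h u)| ≤ contractionCoeff Q := by
  set g : Tj → ℝ := fun t => ∑ u : Tu, Q t u * h u with hg
  obtain ⟨t₁, -, ht₁⟩ := Finset.exists_max_image (Finset.univ : Finset Tj) g ⟨Classical.arbitrary Tj, Finset.mem_univ _⟩
  obtain ⟨t₂, -, ht₂⟩ := Finset.exists_min_image (Finset.univ : Finset Tj) g ⟨Classical.arbitrary Tj, Finset.mem_univ _⟩
  have hmax : ∀ t, g t ≤ g t₁ := fun t => ht₁ t (Finset.mem_univ t)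
  have hmin : ∀ t, g t₂ ≤ g t := fun t => ht₂ t (Finset.mem_univ t)
  set Sb := ∑ σ ∈ W, b σ
  have hN_ub : ∑ σ ∈ W, b σ * g (tof σ) ≤ Sb * g t₁ := by
    rw [Finset.sum_mul]
    exact Finset.sum_le_sum fun σ hσ => mul_le_mul_of_nonneg_left (hmax (tof σ)) (hb0 σ hσ)
  have hN_lb : Sb * g t₂ ≤ ∑ σ ∈ W, b σ * g (tof σ) := by
    rw [Finset.sum_mul]
    exact Finset.sum_le_sum fun σ hσ => mul_le_mul_of_nonneg_left (hmin (tof σ)) (hb0 σ hσ)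
  have hM_ub : ∑ σ ∈ W, w σ * g (tof σ) ≤ g t₁ := by
    calc ∑ σ ∈ W, w σ * g (tof σ) ≤ ∑ σ ∈ W, w σ * g t₁ :=
          Finset.sum_le_sum fun σ hσ => mul_le_mul_of_nonneg_left (hmax (tof σ)) (hw0 σ hσ)
      _ = g t₁ := by rw [← Finset.sum_mul, hw1, one_mul]
  have hM_lb : g t₂ ≤ ∑ σ ∈ W, w σ * g (tof σ) := by
    calc g t₂ = ∑ σ ∈ W, w σ * g t₂ := by rw [← Finset.sum_mul, hw1, one_mul]
      _ ≤ ∑ σ ∈ W, w σ * g (tof σ) :=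
          Finset.sum_le_sum fun σ hσ => mul_le_mul_of_nonneg_left (hmin (tof σ)) (hw0 σ hσ)
  have hq_ub : (∑ σ ∈ W, b σ * g (tof σ)) / Sb ≤ g t₁ := by
    rw [div_le_iff₀ hbpos]
    linarith [hN_ub]
  have hq_lb : g t₂ ≤ (∑ σ ∈ W, b σ * g (tof σ)) / Sb := by
    rw [le_div_iff₀ hbpos]
    linarith [hN_lb]
  have hdiff := g_diff_le Q hQ1 h hh0 hh1 t₁ t₂
  rw [abs_le]
  constructor <;> [skip; skip] <;> simp only [hg] at *
  · linarith
  · linarith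


/-- For a finite-state (non-homogeneous) Markov chain `X_1, …, X_n`, the uniform mixing
coefficient between the past `σ(X_i, i ≤ j)` and the future `σ(X_i, i ≥ j+k)` is bounded
by the contraction coefficient of the product `P_j·P_{j+1}·⋯·P_{j+k−1}`. -/
theorem stmt19 {Ω : Type} [MeasurableSpace Ω] (μ : Measure Ω) [IsProbabilityMeasure μ]
    (n : ℕ) (S : ℕ → Type) [∀ i, Fintype (S i)] [∀ i, Nonempty (S i)]
    (X : (i : ℕ) → Ω → S i) (π : S 1 → ℝ)
    (P : (i : ℕ) → S i → S (i + 1) → ℝ)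
    (hπ : (∀ s, 0 ≤ π s) ∧ ∑ s : S 1, π s = 1)
    (hP : ∀ i, IsStochastic (P i))
    (hlaw : ∀ s : (i : ℕ) → S i,
      (μ {ω | ∀ i ∈ Finset.Icc 1 n, X i ω = s i}).toReal =
        π (s 1) * ∏ i ∈ Finset.Ico 1 n, P i (s i) (s (i + 1)))
    (j k : ℕ) (hj : 1 ≤ j) (hk : 1 ≤ k) (hjk : j + k ≤ n)
    (A B : Set Ω)
    (hA : MeasurableSet[⨆ i ∈ {i : ℕ | j + k ≤ i ∧ i ≤ n},
      MeasurableSpace.comap (X i) ⊤] A)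
    (hB : MeasurableSet[⨆ i ∈ {i : ℕ | 1 ≤ i ∧ i ≤ j},
      MeasurableSpace.comap (X i) ⊤] B)
    (hBpos : 0 < μ B) :
    |(μ (A ∩ B)).toReal / (μ B).toReal - (μ A).toReal| ≤
      contractionCoeff (matProd P j k) := by
  classical
  obtain ⟨m3, rfl⟩ : ∃ m3, n = j + k + m3 := ⟨n - (j + k), by omega⟩
  -- basic abbreviations (as plain functions)
  set pw : (∀ i : ℕ, S i) → ℝ :=
    fun σ => π (σ 1) * ∏ i ∈ Finset.Ico 1 (j+k+m3), P i (σ i) (σ (i+1)) with hpw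
  set C : (∀ i : ℕ, S i) → Set Ω :=
    fun σ => {ω | ∀ i ∈ Finset.Icc 1 (j+k+m3), X i ω = σ i} with hC
  set af : (∀ i : ℕ, S i) → ℝ := fun σ =>
    if (A ∩ {ω | ∀ i ∈ Finset.Icc (j+k) (j+k+m3), X i ω = σ i}).Nonempty then 1 else 0 with haf
  set bf : (∀ i : ℕ, S i) → ℝ := fun σ =>
    if (B ∩ {ω | ∀ i ∈ Finset.Icc 1 j, X i ω = σ i}).Nonempty then 1 else 0 with hbf
  have hpw0 : ∀ σ, 0 ≤ pw σ :=
    fun σ => mul_nonneg (hπ.1 _) (Finset.prod_nonneg fun i _ => (hP i).1 _ _)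
  have haf01 : ∀ σ, af σ = 0 ∨ af σ = 1 := by
    intro σ; simp only [haf]; split
    · exact Or.inr rfl
    · exact Or.inl rfl
  have hbf01 : ∀ σ, bf σ = 0 ∨ bf σ = 1 := by
    intro σ; simp only [hbf]; split
    · exact Or.inr rfl
    · exact Or.inl rfl
  have hafcong : ∀ σ σ' : ∀ i : ℕ, S i,
      (∀ i ∈ Finset.Icc (j+k) (j+k+m3), σ i = σ' i) → af σ = af σ' := by
    intro σ σ' h
    simp only [haf]
    have hset : {ω | ∀ i ∈ Finset.Icc (j+k) (j+k+m3), X i ω = σ i}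
        = {ω | ∀ i ∈ Finset.Icc (j+k) (j+k+m3), X i ω = σ' i} := by
      ext ω
      exact forall₂_congr fun i hi => by rw [h i hi]
    rw [hset]
  have hbfcong : ∀ σ σ' : ∀ i : ℕ, S i,
      (∀ i ∈ Finset.Icc 1 j, σ i = σ' i) → bf σ = bf σ' := by
    intro σ σ' h
    simp only [hbf]
    have hset : {ω | ∀ i ∈ Finset.Icc 1 j, X i ω = σ i}
        = {ω | ∀ i ∈ Finset.Icc 1 j, X i ω = σ' i} := by
      ext ω
      exact forall₂_congr fun i hi => by rw [h i hi]
    rw [hset]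
  have hAinv : ∀ ω ω' : Ω, (∀ i ∈ {i : ℕ | j + k ≤ i ∧ i ≤ j+k+m3}, X i ω = X i ω') →
      (ω ∈ A ↔ ω' ∈ A) := fun ω ω' h => invariance X _ A hA h
  have hBinv : ∀ ω ω' : Ω, (∀ i ∈ {i : ℕ | 1 ≤ i ∧ i ≤ j}, X i ω = X i ω') →
      (ω ∈ B ↔ ω' ∈ B) := fun ω ω' h => invariance X _ B hB h
  have hlaw' : ∀ σ : ∀ i : ℕ, S i, μ (C σ) = ENNReal.ofReal (pw σ) := by
    intro σ
    conv_lhs => rw [← ENNReal.ofReal_toReal (measure_ne_top μ (C σ))]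
    simp only [hC, hpw]
    rw [hlaw σ]
  -- the atoms cover everything
  have hcover : (⋃ σ ∈ (PF (Finset.Icc 1 (j+k+m3)) : Finset (∀ i : ℕ, S i)), C σ) = Set.univ := by
    ext ω
    simp only [Set.mem_iUnion, Set.mem_univ, iff_true, exists_prop]
    refine ⟨fun i => if h : i ∈ Finset.Icc 1 (j+k+m3) then X i ω else dfl i, ?_, ?_⟩
    · rw [mem_PF]; intro i hi; simp [hi]
    · simp only [hC, Set.mem_setOf_eq]; intro i hi; simp [hi]
  -- simplification of the inner double sum when α ≡ 1
  have hGone : ∀ t : S j,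
      (∑ u : S (j+k), matProd P j k t u *
        ∑ σ3 ∈ (PF (Finset.Ioc (j+k) (j+k+m3)) : Finset (∀ i : ℕ, S i)),
          wseg P (j+k) m3 u σ3)
      = 1 := by
    intro t
    calc ∑ u : S (j+k), matProd P j k t u *
          ∑ σ3 ∈ (PF (Finset.Ioc (j+k) (j+k+m3)) : Finset (∀ i : ℕ, S i)),
            wseg P (j+k) m3 u σ3
        = ∑ u : S (j+k), matProd P j k t u := by
          apply Finset.sum_congr rfl
          intro u _
          rw [wseg_sum_one P hP (j+k) m3 u, mul_one]
      _ = 1 := matProd_rowsum P hP j k t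
  -- total mass one
  have hsumall : ∑ σ ∈ (PF (Finset.Icc 1 (j+k+m3)) : Finset (∀ i : ℕ, S i)), pw σ = 1 := by
    have h1 := full_decomp P hP j k m3 hj hk (fun _ => 1) (fun _ => 1)
      (fun _ _ _ => rfl) (fun _ _ _ => rfl) π
    simp only [one_mul, mul_one] at h1
    simp only [hpw]
    rw [h1]
    have h2 : ∀ σ1 ∈ (PF (Finset.Icc 1 j) : Finset (∀ i : ℕ, S i)),
        (π (σ1 1) * ∏ i ∈ Finset.Ico 1 j, P i (σ1 i) (σ1 (i+1))) *
          (∑ u : S (j+k), matProd P j k (σ1 j) u *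
            ∑ σ3 ∈ (PF (Finset.Ioc (j+k) (j+k+m3)) : Finset (∀ i : ℕ, S i)),
              wseg P (j+k) m3 u σ3)
        = π (σ1 1) * ∏ i ∈ Finset.Ico 1 j, P i (σ1 i) (σ1 (i+1)) := by
      intro σ1 _
      rw [hGone (σ1 j), mul_one]
    rw [Finset.sum_congr rfl h2]
    exact pastW_sum P hP π hπ.2 j hj
  -- representations of A, B, A ∩ B as unions of atoms
  have hsubA : Finset.Icc (j+k) (j+k+m3) ⊆ Finset.Icc 1 (j+k+m3) := by
    intro i hi
    simp only [Finset.mem_Icc] at hi ⊢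
    omega
  have hsubB : Finset.Icc 1 j ⊆ Finset.Icc 1 (j+k+m3) := by
    intro i hi
    simp only [Finset.mem_Icc] at hi ⊢
    omega
  have hArep1 : ∀ ω ∈ A, ∀ (σ : ∀ i : ℕ, S i), ω ∈ C σ → af σ = 1 := by
    intro ω hω σ hσ
    simp only [haf]
    rw [if_pos]
    exact ⟨ω, hω, fun i hi => hσ i (hsubA hi)⟩
  have hBrep1 : ∀ ω ∈ B, ∀ (σ : ∀ i : ℕ, S i), ω ∈ C σ → bf σ = 1 := by
    intro ω hω σ hσ
    simp only [hbf]
    rw [if_pos]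
    exact ⟨ω, hω, fun i hi => hσ i (hsubB hi)⟩
  have hArep2 : ∀ (σ : ∀ i : ℕ, S i), af σ = 1 → ∀ ω ∈ C σ, ω ∈ A := by
    intro σ hone ω hω
    have hne : (A ∩ {ω' | ∀ i ∈ Finset.Icc (j+k) (j+k+m3), X i ω' = σ i}).Nonempty := by
      by_contra h
      simp only [haf] at hone
      rw [if_neg h] at hone
      norm_num at hone
    obtain ⟨ω', hω'A, hω'X⟩ := hne
    refine (hAinv ω ω' ?_).mpr hω'A
    intro i hi
    have hi' : i ∈ Finset.Icc (j+k) (j+k+m3) := by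
      simp only [Set.mem_setOf_eq] at hi
      simp only [Finset.mem_Icc]
      exact hi
    rw [hω i (hsubA hi'), hω'X i hi']
  have hBrep2 : ∀ (σ : ∀ i : ℕ, S i), bf σ = 1 → ∀ ω ∈ C σ, ω ∈ B := by
    intro σ hone ω hω
    have hne : (B ∩ {ω' | ∀ i ∈ Finset.Icc 1 j, X i ω' = σ i}).Nonempty := by
      by_contra h
      simp only [hbf] at hone
      rw [if_neg h] at hone
      norm_num at hone
    obtain ⟨ω', hω'B, hω'X⟩ := hne
    refine (hBinv ω ω' ?_).mpr hω'B
    intro i hi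
    have hi' : i ∈ Finset.Icc 1 j := by
      simp only [Set.mem_setOf_eq] at hi
      simp only [Finset.mem_Icc]
      exact hi
    rw [hω i (hsubB hi'), hω'X i hi']
  have hmemC : ∀ ω : Ω, ∃ σ ∈ (PF (Finset.Icc 1 (j+k+m3)) : Finset (∀ i : ℕ, S i)), ω ∈ C σ := by
    intro ω
    refine ⟨fun i => if h : i ∈ Finset.Icc 1 (j+k+m3) then X i ω else dfl i, ?_, ?_⟩
    · rw [mem_PF]; intro i hi; simp [hi]
    · simp only [hC, Set.mem_setOf_eq]; intro i hi; simp [hi]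
  -- a generic lemma instance: measure of a filtered union
  have hmeas : ∀ (W : Set Ω) (q : (∀ i : ℕ, S i) → ℝ),
      (∀ σ, q σ = 0 ∨ q σ = 1) →
      (∀ ω ∈ W, ∀ σ : ∀ i : ℕ, S i, ω ∈ C σ → q σ = 1) →
      (∀ σ : ∀ i : ℕ, S i, q σ = 1 → ∀ ω ∈ C σ, ω ∈ W) →
      (μ W).toReal = ∑ σ ∈ (PF (Finset.Icc 1 (j+k+m3)) : Finset (∀ i : ℕ, S i)), q σ * pw σ := by
    intro W q hq01 hq1 hq2
    have hrep : W = ⋃ σ ∈ ((PF (Finset.Icc 1 (j+k+m3)) : Finset (∀ i : ℕ, S i)).filter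
        (fun σ => q σ = 1)), C σ := by
      ext ω
      simp only [Set.mem_iUnion, exists_prop, Finset.mem_filter]
      constructor
      · intro hω
        obtain ⟨σ, hσ1, hσ2⟩ := hmemC ω
        exact ⟨σ, ⟨hσ1, hq1 ω hω σ hσ2⟩, hσ2⟩
      · rintro ⟨σ, ⟨-, hσq⟩, hσC⟩
        exact hq2 σ hσq ω hσC
    rw [hrep, measure_biUnion_atoms μ _ _ (Finset.filter_subset _ _) C hcover pw hlaw'
      hpw0 hsumall, ENNReal.toReal_ofReal (Finset.sum_nonneg fun σ _ => hpw0 σ)]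
    rw [Finset.sum_filter]
    apply Finset.sum_congr rfl
    intro σ _
    rcases hq01 σ with h | h
    · rw [h]; simp [h]
    · simp [h]
  have hμA : (μ A).toReal = ∑ σ ∈ (PF (Finset.Icc 1 (j+k+m3)) : Finset (∀ i : ℕ, S i)),
      af σ * pw σ := hmeas A af haf01 hArep1 hArep2
  have hμB : (μ B).toReal = ∑ σ ∈ (PF (Finset.Icc 1 (j+k+m3)) : Finset (∀ i : ℕ, S i)),
      bf σ * pw σ := hmeas B bf hbf01 hBrep1 hBrep2
  have hμAB : (μ (A ∩ B)).toReal = ∑ σ ∈ (PF (Finset.Icc 1 (j+k+m3)) : Finset (∀ i : ℕ, S i)),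
      (af σ * bf σ) * pw σ := by
    apply hmeas (A ∩ B) (fun σ => af σ * bf σ)
    · intro σ
      rcases haf01 σ with h | h
      · rw [h, zero_mul]; exact Or.inl rfl
      · rcases hbf01 σ with h' | h'
        · rw [h', mul_zero]; exact Or.inl rfl
        · rw [h, h', mul_one]; exact Or.inr rfl
    · intro ω hω σ hσ
      rw [hArep1 ω hω.1 σ hσ, hBrep1 ω hω.2 σ hσ, mul_one]
    · intro σ hσ ω hω
      have h1 : af σ = 1 := by
        rcases haf01 σ with h | h
        · rw [h, zero_mul] at hσ; norm_num at hσ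
        · exact h
      have h2 : bf σ = 1 := by
        rcases hbf01 σ with h | h
        · rw [h, mul_zero] at hσ; norm_num at hσ
        · exact h
      exact ⟨hArep2 σ h1 ω hω, hBrep2 σ h2 ω hω⟩
  -- decompositions via full_decomp
  have hdecAB := full_decomp P hP j k m3 hj hk af bf hafcong hbfcong π
  have hdecB := full_decomp P hP j k m3 hj hk (fun _ => 1) bf (fun _ _ _ => rfl) hbfcong π
  have hdecA := full_decomp P hP j k m3 hj hk af (fun _ => 1) hafcong (fun _ _ _ => rfl) π
  simp only [one_mul, mul_one] at hdecB
  simp only [one_mul, mul_one] at hdecA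
  have hdecB' : (∑ σ ∈ (PF (Finset.Icc 1 (j+k+m3)) : Finset (∀ i : ℕ, S i)),
      bf σ * (π (σ 1) * ∏ i ∈ Finset.Ico 1 (j+k+m3), P i (σ i) (σ (i+1))))
      = ∑ σ1 ∈ (PF (Finset.Icc 1 j) : Finset (∀ i : ℕ, S i)),
          bf σ1 * (π (σ1 1) * ∏ i ∈ Finset.Ico 1 j, P i (σ1 i) (σ1 (i+1))) := by
    rw [hdecB]
    apply Finset.sum_congr rfl
    intro σ1 _
    rw [hGone (σ1 j), mul_one]
  -- the future indicator function
  set futF : S (j+k) → ℝ := fun u =>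
    ∑ σ3 ∈ (PF (Finset.Ioc (j+k) (j+k+m3)) : Finset (∀ i : ℕ, S i)),
      wseg P (j+k) m3 u σ3 * af (Function.update σ3 (j+k) u) with hfutF
  have hfutF0 : ∀ u, 0 ≤ futF u := by
    intro u
    apply Finset.sum_nonneg
    intro σ3 _
    apply mul_nonneg (wseg_nonneg P hP _ _ _ _)
    rcases haf01 (Function.update σ3 (j+k) u) with h | h <;> rw [h] <;> norm_num
  have hfutF1 : ∀ u, futF u ≤ 1 := by
    intro u
    rw [hfutF]
    calc ∑ σ3 ∈ (PF (Finset.Ioc (j+k) (j+k+m3)) : Finset (∀ i : ℕ, S i)),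
          wseg P (j+k) m3 u σ3 * af (Function.update σ3 (j+k) u)
        ≤ ∑ σ3 ∈ (PF (Finset.Ioc (j+k) (j+k+m3)) : Finset (∀ i : ℕ, S i)),
          wseg P (j+k) m3 u σ3 := by
          apply Finset.sum_le_sum
          intro σ3 _
          have hle1 : af (Function.update σ3 (j+k) u) ≤ 1 := by
            rcases haf01 (Function.update σ3 (j+k) u) with h | h <;> rw [h] <;> norm_num
          calc wseg P (j+k) m3 u σ3 * af (Function.update σ3 (j+k) u)
              ≤ wseg P (j+k) m3 u σ3 * 1 :=
                mul_le_mul_of_nonneg_left hle1 (wseg_nonneg P hP _ _ _ _)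
            _ = wseg P (j+k) m3 u σ3 := mul_one _
      _ = 1 := wseg_sum_one P hP (j+k) m3 u
  -- positivity of the denominator
  have hμBpos : 0 < (μ B).toReal := ENNReal.toReal_pos hBpos.ne' (measure_ne_top μ B)
  have hBsum : 0 < ∑ σ1 ∈ (PF (Finset.Icc 1 j) : Finset (∀ i : ℕ, S i)),
      bf σ1 * (π (σ1 1) * ∏ i ∈ Finset.Ico 1 j, P i (σ1 i) (σ1 (i+1))) := by
    rw [← hdecB']
    have h' : (μ B).toReal = ∑ σ ∈ (PF (Finset.Icc 1 (j+k+m3)) : Finset (∀ i : ℕ, S i)),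
        bf σ * (π (σ 1) * ∏ i ∈ Finset.Ico 1 (j+k+m3), P i (σ i) (σ (i+1))) := by
      rw [hμB]
    rw [← h']
    exact hμBpos
  -- put everything together
  rw [hμAB, hμB, hμA]
  simp only [hpw]
  rw [hdecAB, hdecB', hdecA]
  exact final_ineq (matProd P j k) (matProd_rowsum P hP j k) futF hfutF0 hfutF1
    (PF (Finset.Icc 1 j))
    (fun σ1 => bf σ1 * (π (σ1 1) * ∏ i ∈ Finset.Ico 1 j, P i (σ1 i) (σ1 (i+1))))
    (fun σ1 => π (σ1 1) * ∏ i ∈ Finset.Ico 1 j, P i (σ1 i) (σ1 (i+1)))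
    (fun σ1 _ => mul_nonneg (by rcases hbf01 σ1 with h | h <;> rw [h] <;> norm_num)
      (mul_nonneg (hπ.1 _) (Finset.prod_nonneg fun i _ => (hP i).1 _ _)))
    (fun σ1 _ => by
      show bf σ1 * (π (σ1 1) * ∏ i ∈ Finset.Ico 1 j, P i (σ1 i) (σ1 (i+1)))
        ≤ π (σ1 1) * ∏ i ∈ Finset.Ico 1 j, P i (σ1 i) (σ1 (i+1))
      rcases hbf01 σ1 with h | h <;> rw [h]
      · rw [zero_mul]
        exact mul_nonneg (hπ.1 _) (Finset.prod_nonneg fun i _ => (hP i).1 _ _)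
      · rw [one_mul])
    (fun σ1 _ => mul_nonneg (hπ.1 _) (Finset.prod_nonneg fun i _ => (hP i).1 _ _))
    (pastW_sum P hP π hπ.2 j hj) hBsum (fun σ1 => σ1 j)
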